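/- Two distinct oriented lines γ, γ̃ in ℝ³ satisfy Q(γ, γ̃) = |Z₁ - Z̃₁|² - |Z₂ - Z̃₂|² = 0 in the conformal coordinates (Z₁, Z₂) if and only if the lines either intersect or are parallel. -/

import Mathlib

open Complex

/-- The oriented line in `ℝ³ = ℂ × ℝ` with direction `ξ` (stereographic coordinate) and
fibre coordinate `η`, given by the incidence relation `η = ½(z − 2tξ − z̄ξ²)`. -/
def johnLine (ξ η : ℂ) : Set (ℂ × ℝ) :=
  {p | η = (p.1 - 2 * (p.2 : ℂ) * ξ - (starRingEnd ℂ) p.1 * ξ ^ 2) / 2}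

/-- John's conformal coordinate `Z₁ = X₁ + iX₂` on line space (upper hemisphere `|ξ| < 1`). -/
noncomputable def johnZ₁ (ξ η : ℂ) : ℂ :=
  2 * (η + ξ ^ 2 * (starRingEnd ℂ) η - I * (1 + ξ * (starRingEnd ℂ) ξ) * ξ) /
    (1 - ξ ^ 2 * ((starRingEnd ℂ) ξ) ^ 2)

/-- John's conformal coordinate `Z₂ = X₃ + iX₄` on line space (upper hemisphere `|ξ| < 1`). -/
noncomputable def johnZ₂ (ξ η : ℂ) : ℂ :=
  2 * (η + ξ ^ 2 * (starRingEnd ℂ) η + I * (1 + ξ * (starRingEnd ℂ) ξ) * ξ) /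
    (1 - ξ ^ 2 * ((starRingEnd ℂ) ξ) ^ 2)

/-- The neutral distance function `Q(γ,γ̃) = |Z₁ − Z̃₁|² − |Z₂ − Z̃₂|²`. -/
noncomputable def neutralQ (ξ η ξ' η' : ℂ) : ℝ :=
  Complex.normSq (johnZ₁ ξ η - johnZ₁ ξ' η') - Complex.normSq (johnZ₂ ξ η - johnZ₂ ξ' η')

/- Auxiliary definitions: a line `(ξ,η)` is `{(α + tβ, t) : t ∈ ℝ}` where -/
noncomputable def lineA (ξ η : ℂ) : ℂ :=
  2 * (η + ξ ^ 2 * (starRingEnd ℂ) η) / (1 - ξ ^ 2 * ((starRingEnd ℂ) ξ) ^ 2)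

noncomputable def lineB (ξ : ℂ) : ℂ := 2 * ξ / (1 - ξ * (starRingEnd ℂ) ξ)

lemma one_sub_mul_conj_ne_zero {ξ : ℂ} (hξ : ‖ξ‖ < 1) :
    1 - ξ * (starRingEnd ℂ) ξ ≠ 0 := by
  rw [Complex.mul_conj]
  have h : Complex.normSq ξ < 1 := by
    have := Complex.sq_norm ξ
    nlinarith [norm_nonneg ξ]
  intro hc
  have : (Complex.normSq ξ : ℂ) = 1 := by linear_combination -hc
  have : (Complex.normSq ξ : ℝ) = 1 := by exact_mod_cast this
  linarith

lemma one_add_mul_conj_ne_zero (ξ : ℂ) : 1 + ξ * (starRingEnd ℂ) ξ ≠ 0 := by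
  rw [Complex.mul_conj]
  intro hc
  have : (Complex.normSq ξ : ℂ) = -1 := by linear_combination hc
  have : (Complex.normSq ξ : ℝ) = -1 := by exact_mod_cast this
  nlinarith [Complex.normSq_nonneg ξ]

lemma denom_ne_zero {ξ : ℂ} (hξ : ‖ξ‖ < 1) :
    1 - ξ ^ 2 * ((starRingEnd ℂ) ξ) ^ 2 ≠ 0 := by
  have h1 := one_sub_mul_conj_ne_zero hξ
  have h2 := one_add_mul_conj_ne_zero ξ
  have : 1 - ξ ^ 2 * ((starRingEnd ℂ) ξ) ^ 2
      = (1 - ξ * (starRingEnd ℂ) ξ) * (1 + ξ * (starRingEnd ℂ) ξ) := by ring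
  rw [this]
  exact mul_ne_zero h1 h2

lemma johnZ₁_eq {ξ : ℂ} (η : ℂ) (hξ : ‖ξ‖ < 1) :
    johnZ₁ ξ η = lineA ξ η - I * lineB ξ := by
  have h1 := one_sub_mul_conj_ne_zero hξ
  have h2 := one_add_mul_conj_ne_zero ξ
  have hD := denom_ne_zero hξ
  unfold johnZ₁ lineA lineB
  field_simp
  ring

lemma johnZ₂_eq {ξ : ℂ} (η : ℂ) (hξ : ‖ξ‖ < 1) :
    johnZ₂ ξ η = lineA ξ η + I * lineB ξ := by
  have h1 := one_sub_mul_conj_ne_zero hξ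
  have h2 := one_add_mul_conj_ne_zero ξ
  have hD := denom_ne_zero hξ
  unfold johnZ₂ lineA lineB
  field_simp
  ring

lemma normSq_diff (a b : ℂ) :
    Complex.normSq (a - I * b) - Complex.normSq (a + I * b)
      = -4 * (a * (starRingEnd ℂ) b).im := by
  simp [Complex.normSq_apply, Complex.mul_im, Complex.mul_re]
  ring

lemma neutralQ_eq (ξ η ξ' η' : ℂ) (hξ : ‖ξ‖ < 1) (hξ' : ‖ξ'‖ < 1) :
    neutralQ ξ η ξ' η'
      = -4 * ((lineA ξ η - lineA ξ' η') * (starRingEnd ℂ) (lineB ξ - lineB ξ')).im := by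
  unfold neutralQ
  rw [johnZ₁_eq η hξ, johnZ₁_eq η' hξ', johnZ₂_eq η hξ, johnZ₂_eq η' hξ']
  have h := normSq_diff (lineA ξ η - lineA ξ' η') (lineB ξ - lineB ξ')
  rw [← h]
  ring_nf

lemma mem_johnLine_iff {ξ η : ℂ} (hξ : ‖ξ‖ < 1) (p : ℂ × ℝ) :
    p ∈ johnLine ξ η ↔ p.1 = lineA ξ η + (p.2 : ℂ) * lineB ξ := by
  have h1 := one_sub_mul_conj_ne_zero hξ
  have h2 := one_add_mul_conj_ne_zero ξ
  have hD := denom_ne_zero hξ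
  obtain ⟨z, t⟩ := p
  simp only [johnLine, Set.mem_setOf_eq]
  constructor
  · intro h
    rw [lineA, lineB, h]
    simp only [map_div₀, map_sub, map_mul, map_pow, Complex.conj_conj, Complex.conj_ofReal,
      map_ofNat]
    field_simp
    ring
  · intro h
    have hD2 : 1 - ((starRingEnd ℂ) ξ) ^ 2 * ξ ^ 2 ≠ 0 := fun hc => hD (by linear_combination hc)
    have h1b : 1 - (starRingEnd ℂ) ξ * ξ ≠ 0 := fun hc => h1 (by linear_combination hc)
    rw [h, lineA, lineB]
    simp only [map_add, map_div₀, map_sub, map_mul, map_pow, Complex.conj_conj,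
      Complex.conj_ofReal, map_ofNat, map_one]
    field_simp
    ring

lemma lineB_inj {ξ ξ' : ℂ} (hξ : ‖ξ‖ < 1) (hξ' : ‖ξ'‖ < 1)
    (h : lineB ξ = lineB ξ') : ξ = ξ' := by
  have h1 := one_sub_mul_conj_ne_zero hξ
  have h1' := one_sub_mul_conj_ne_zero hξ'
  rw [lineB, lineB, div_eq_div_iff h1 h1'] at h
  rw [Complex.mul_conj, Complex.mul_conj] at h
  set r := ‖ξ‖ with hr
  set r' := ‖ξ'‖ with hr'
  have hn : Complex.normSq ξ = r ^ 2 := by rw [hr, Complex.sq_norm]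
  have hn' : Complex.normSq ξ' = r' ^ 2 := by rw [hr', Complex.sq_norm]
  have habs : r * (1 - r' ^ 2) = r' * (1 - r ^ 2) := by
    have := congrArg norm h
    simp only [norm_mul, Complex.norm_ofNat] at this
    have e1 : ‖(1 - (Complex.normSq ξ' : ℂ))‖ = 1 - r' ^ 2 := by
      rw [← Complex.ofReal_one, ← Complex.ofReal_sub, Complex.norm_real, Real.norm_eq_abs, hn',
        abs_of_pos (by nlinarith [norm_nonneg ξ'])]
    have e2 : ‖(1 - (Complex.normSq ξ : ℂ))‖ = 1 - r ^ 2 := by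
      rw [← Complex.ofReal_one, ← Complex.ofReal_sub, Complex.norm_real, Real.norm_eq_abs, hn,
        abs_of_pos (by nlinarith [norm_nonneg ξ])]
    rw [e1, e2] at this
    nlinarith [this]
  have key : (r - r') * (1 + r * r') = 0 := by linear_combination habs
  have hpos : 0 < 1 + r * r' := by nlinarith [norm_nonneg ξ, norm_nonneg ξ']
  have hrr : r = r' := by
    rcases mul_eq_zero.mp key with h0 | h0
    · linarith
    · linarith
  have hnn : Complex.normSq ξ = Complex.normSq ξ' := by rw [hn, hn', hrr]
  rw [hnn] at h
  have hnz : (2 : ℂ) * (1 - (Complex.normSq ξ' : ℂ)) ≠ 0 := by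
    apply mul_ne_zero two_ne_zero
    intro hc
    have : (Complex.normSq ξ' : ℂ) = 1 := by linear_combination -hc
    have : (Complex.normSq ξ' : ℝ) = 1 := by exact_mod_cast this
    nlinarith [Complex.sq_norm ξ', norm_nonneg ξ']
  have : ξ * (2 * (1 - (Complex.normSq ξ' : ℂ))) = ξ' * (2 * (1 - (Complex.normSq ξ' : ℂ))) := by
    linear_combination h
  exact mul_right_cancel₀ hnz this

lemma exists_real_mul {a w : ℂ} (hw : w ≠ 0) (h : (a * (starRingEnd ℂ) w).im = 0) :
    ∃ s : ℝ, a = (s : ℂ) * w := by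
  refine ⟨(a * (starRingEnd ℂ) w).re / Complex.normSq w, ?_⟩
  have hn : Complex.normSq w ≠ 0 := (Complex.normSq_pos.mpr hw).ne'
  have hre : ((a * (starRingEnd ℂ) w).re : ℂ) = a * (starRingEnd ℂ) w := by
    apply Complex.ext <;> simp [h]
  rw [Complex.ofReal_div, div_mul_eq_mul_div, eq_div_iff (by exact_mod_cast hn)]
  rw [hre, ← Complex.mul_conj]
  ring

/-- Two distinct oriented lines in `ℝ³` are at zero neutral distance `Q = 0` iff they
either intersect or are parallel (have the same direction). -/
theorem neutralQ_zero_iff_intersect_or_parallel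
    (ξ η ξ' η' : ℂ) (hξ : ‖ξ‖ < 1) (hξ' : ‖ξ'‖ < 1)
    (hdist : (ξ, η) ≠ (ξ', η')) :
    neutralQ ξ η ξ' η' = 0 ↔
      (∃ p : ℂ × ℝ, p ∈ johnLine ξ η ∧ p ∈ johnLine ξ' η') ∨ ξ = ξ' := by
  rw [neutralQ_eq ξ η ξ' η' hξ hξ']
  constructor
  · intro hQ
    by_cases hξξ : ξ = ξ'
    · exact Or.inr hξξ
    · left
      have hβ : lineB ξ - lineB ξ' ≠ 0 := by
        intro hc
        exact hξξ (lineB_inj hξ hξ' (by linear_combination hc))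
      have him : ((lineA ξ η - lineA ξ' η') * (starRingEnd ℂ) (lineB ξ - lineB ξ')).im = 0 := by
        linarith
      obtain ⟨s, hs⟩ := exists_real_mul hβ him
      refine ⟨(lineA ξ η + ((-s : ℝ) : ℂ) * lineB ξ, -s), ?_, ?_⟩
      · rw [mem_johnLine_iff hξ]
      · rw [mem_johnLine_iff hξ']
        push_cast
        push_cast at hs
        linear_combination hs
  · intro h
    rcases h with ⟨p, hp1, hp2⟩ | hξξ
    · rw [mem_johnLine_iff hξ] at hp1
      rw [mem_johnLine_iff hξ'] at hp2
      have hd : lineA ξ η - lineA ξ' η' = ((-p.2 : ℝ) : ℂ) * (lineB ξ - lineB ξ') := by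
        push_cast
        linear_combination hp2 - hp1
      rw [hd, mul_assoc, Complex.mul_conj]
      simp [← Complex.ofReal_mul]
    · rw [hξξ]
      simp
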